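/- Let γ₁, γ₂: S¹ → S³ be a Lipschitz link, v ∈ B⁴, z ∈ (0,1), and define a(v,z) = 1 + (1−|v|²)(2z−1)/((1−|v|²+z)(1−z)), b(v,z) = (2z−1)/((1−|v|²+z)(1−z)), c(v) = v/(1−|v|²). Then for all s,t: |F_v(γ₁(s)) − D_{c(v),a(v,z)}(F_v(γ₂(t)))|² = a(v,z)·|F_v(γ₁(s)) − F_v(γ₂(t))|² + b(v,z)², where D_{w,λ}(x) = λ(x−w)+w and F_v(x)=(x−v)/|x−v|². -/

import Mathlib

open Real

local notation "⟪" x ", " y "⟫" => @inner ℝ _ _ x y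

lemma sphere_dilation_identity {E : Type*} [NormedAddCommGroup E] [InnerProductSpace ℝ E]
    (X Y c : E) (r a b : ℝ) (hX : ‖X - c‖ ^ 2 = r ^ 2) (hY : ‖Y - c‖ ^ 2 = r ^ 2)
    (hab : (1 - a) ^ 2 * r ^ 2 = b ^ 2) :
    ‖X - (a • (Y - c) + c)‖ ^ 2 = a * ‖X - Y‖ ^ 2 + b ^ 2 := by
  have h1 : X - (a • (Y - c) + c) = (X - c) - a • (Y - c) := by module
  have h2 : X - Y = (X - c) - (Y - c) := by abel
  rw [h1, h2, norm_sub_sq_real ((X - c)) (a • (Y - c)), real_inner_smul_right, norm_smul,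
    Real.norm_eq_abs, mul_pow, sq_abs, norm_sub_sq_real (X - c) (Y - c)]
  nlinarith [hX, hY]

lemma inversion_sphere {E : Type*} [NormedAddCommGroup E] [InnerProductSpace ℝ E]
    (u v : E) (hu : ‖u‖ = 1) (hv : ‖v‖ < 1) :
    ‖(‖u - v‖ ^ 2)⁻¹ • (u - v) - (1 - ‖v‖ ^ 2)⁻¹ • v‖ ^ 2 = ((1 - ‖v‖ ^ 2)⁻¹) ^ 2 := by
  set d : ℝ := ‖u - v‖ ^ 2 with hd
  set k : ℝ := 1 - ‖v‖ ^ 2 with hk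
  have hdne : d ≠ 0 := by
    have huv : u ≠ v := fun h => by rw [h] at hu; exact absurd hu (by linarith)
    exact pow_ne_zero 2 (norm_ne_zero_iff.mpr (sub_ne_zero.mpr huv))
  have hkne : k ≠ 0 := by nlinarith [norm_nonneg v]
  have hI : ⟪u - v, v⟫ = (k - d) / 2 := by
    have hexp : d = ‖u‖ ^ 2 - 2 * ⟪u, v⟫ + ‖v‖ ^ 2 := norm_sub_sq_real u v
    rw [inner_sub_left, real_inner_self_eq_norm_sq]
    rw [hu] at hexp
    linarith
  rw [norm_sub_sq_real, real_inner_smul_left, real_inner_smul_right, hI,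
    norm_smul, norm_smul, Real.norm_eq_abs, Real.norm_eq_abs, mul_pow, mul_pow, sq_abs, sq_abs,
    ← real_inner_self_eq_norm_sq (u - v), real_inner_self_eq_norm_sq,
    ← hd]
  have : ‖v‖ ^ 2 = 1 - k := by rw [hk]; ring
  rw [this]
  field_simp
  ring

theorem canonical_family_distance_identity
    (γ₁ γ₂ : ℝ → EuclideanSpace ℝ (Fin 4)) (K₁ K₂ : NNReal)
    (h₁ : LipschitzWith K₁ γ₁) (h₂ : LipschitzWith K₂ γ₂)
    (hS₁ : ∀ s, ‖γ₁ s‖ = 1) (hS₂ : ∀ t, ‖γ₂ t‖ = 1)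
    (v : EuclideanSpace ℝ (Fin 4)) (hv : ‖v‖ < 1)
    (z : ℝ) (hz : z ∈ Set.Ioo (0:ℝ) 1)
    (F : EuclideanSpace ℝ (Fin 4) → EuclideanSpace ℝ (Fin 4))
    (hF : ∀ x, F x = (‖x - v‖ ^ 2)⁻¹ • (x - v))
    (a b : ℝ) (c : EuclideanSpace ℝ (Fin 4))
    (ha : a = 1 + (1 - ‖v‖ ^ 2) * (2 * z - 1) / ((1 - ‖v‖ ^ 2 + z) * (1 - z)))
    (hb : b = (2 * z - 1) / ((1 - ‖v‖ ^ 2 + z) * (1 - z)))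
    (hc : c = (1 - ‖v‖ ^ 2)⁻¹ • v) :
    ∀ s t, ‖F (γ₁ s) - (a • (F (γ₂ t) - c) + c)‖ ^ 2
        = a * ‖F (γ₁ s) - F (γ₂ t)‖ ^ 2 + b ^ 2 := by
  intro s t
  have hX := inversion_sphere (γ₁ s) v (hS₁ s) hv
  have hY := inversion_sphere (γ₂ t) v (hS₂ t) hv
  rw [← hc] at hX hY
  rw [hF, hF]
  refine sphere_dilation_identity _ _ _ ((1 - ‖v‖ ^ 2)⁻¹) a b hX hY ?_
  have h1a : 1 - a = -((1 - ‖v‖ ^ 2) * b) := by rw [ha, hb]; ring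
  have hkne : (1 - ‖v‖ ^ 2) ≠ 0 := by nlinarith [norm_nonneg v]
  rw [h1a]
  field_simp
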